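/- arXiv:2110.00915 — 6 statements merged into one kernel-verified Lean document; each statement's English description precedes it below -/
import Mathlib

section
/- Let x be a closed-loop trajectory of the sampled-data control-affine system. If h(x(0)) ≥ 0 and for every k ∈ ℕ and every t ∈ (t_k, t_{k+1}) one has ξ(x(t), u_k) ≥ 0, i.e. L_f h(x(t)) + L_g h(x(t)) u_k + γ h(x(t)) ≥ 0, then h(x(t)) ≥ 0 for all t ≥ 0. -/
open Set Filter

noncomputable section

/-- `ℝⁿ` as a Euclidean space. -/
abbrev E (n : ℕ) : Type := EuclideanSpace ℝ (Fin n)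

/-- `ξ(x,u) = L_f h(x) + L_g h(x) u + γ h(x)`, where `L_f h(x) = ∇h(x)·f(x)` and
`L_g h(x) u = ∇h(x)·(g(x)u)`. -/
noncomputable def xi {n m : ℕ} (f : E n → E n) (g : E n → E m →L[ℝ] E n)
    (h : E n → ℝ) (γ : ℝ) (p : E n) (v : E m) : ℝ :=
  fderiv ℝ h p (f p) + fderiv ℝ h p (g p v) + γ * h p

/-- Continuous-time invariance from the inter-sample CBF inequality: if `h(x(0)) ≥ 0` and
`ξ(x(t), u_k) ≥ 0` for all `k` and all `t ∈ (t_k, t_{k+1})`, then `h(x(t)) ≥ 0` for all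
`t ≥ 0` along the closed-loop sampled-data trajectory. -/
theorem stmt_1 {n m : ℕ} (f : E n → E n) (g : E n → E m →L[ℝ] E n)
    (hf : LocallyLipschitz f) (hg : LocallyLipschitz g)
    (U : Set (E m)) (h : E n → ℝ) (hh : ContDiff ℝ 1 h) (γ : ℝ) (hγ : 0 < γ)
    (t : ℕ → ℝ) (ht0 : t 0 = 0) (htmono : StrictMono t)
    (httop : Tendsto t atTop atTop)
    (u : ℕ → E m) (hu : ∀ k, u k ∈ U)
    (x : ℝ → E n) (hxc : ContinuousOn x (Ici (0 : ℝ)))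
    (hode : ∀ k, ∀ s ∈ Ioo (t k) (t (k + 1)),
      HasDerivAt x (f (x s) + g (x s) (u k)) s)
    (hinit : 0 ≤ h (x 0))
    (hsafe : ∀ k, ∀ s ∈ Ioo (t k) (t (k + 1)), 0 ≤ xi f g h γ (x s) (u k)) :
    ∀ s, 0 ≤ s → 0 ≤ h (x s) := by
  set z : ℝ → ℝ := fun s => Real.exp (γ * s) * h (x s) with hz
  have htnn : ∀ k, (0 : ℝ) ≤ t k := by
    intro k
    have := htmono.monotone (Nat.zero_le k)
    rw [ht0] at this
    exact this
  -- z has nonnegative derivative on each open interval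
  have hderiv : ∀ k, ∀ s ∈ Ioo (t k) (t (k + 1)),
      HasDerivAt z (Real.exp (γ * s) * xi f g h γ (x s) (u k)) s := by
    intro k s hs
    have hx' := hode k s hs
    have hhdiff : HasFDerivAt h (fderiv ℝ h (x s)) (x s) :=
      ((hh.differentiable one_ne_zero) (x s)).hasFDerivAt
    have hcomp : HasDerivAt (fun τ => h (x τ))
        (fderiv ℝ h (x s) (f (x s) + g (x s) (u k))) s :=
      hhdiff.comp_hasDerivAt s hx'
    have hexp : HasDerivAt (fun τ => Real.exp (γ * τ)) (Real.exp (γ * s) * γ) s := by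
      have : HasDerivAt (fun τ : ℝ => γ * τ) γ s := by
        simpa using (hasDerivAt_id s).const_mul γ
      simpa using this.exp
    have := hexp.mul hcomp
    refine this.congr_deriv ?_
    rw [xi, map_add]
    ring
  have hmono : ∀ k, MonotoneOn z (Icc (t k) (t (k + 1))) := by
    intro k
    have hsub : Icc (t k) (t (k + 1)) ⊆ Ici (0 : ℝ) := fun s hs =>
      le_trans (htnn k) hs.1
    have hcz : ContinuousOn z (Icc (t k) (t (k + 1))) := by
      apply ContinuousOn.mul
      · exact (Real.continuous_exp.comp (continuous_const.mul continuous_id)).continuousOn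
      · exact hh.continuous.comp_continuousOn (hxc.mono hsub)
    apply monotoneOn_of_deriv_nonneg (convex_Icc _ _) hcz
    · intro s hs
      rw [interior_Icc] at hs
      exact ((hderiv k s hs).differentiableAt).differentiableWithinAt
    · intro s hs
      rw [interior_Icc] at hs
      rw [(hderiv k s hs).deriv]
      exact mul_nonneg (Real.exp_nonneg _) (hsafe k s hs)
  have hz0 : 0 ≤ z 0 := by
    simp only [hz, mul_zero, Real.exp_zero, one_mul]
    exact hinit
  have hzk : ∀ k, 0 ≤ z (t k) := by
    intro k
    induction k with
    | zero => rw [ht0]; exact hz0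
    | succ k ih =>
      have hle := htmono (Nat.lt_succ_self k)
      have := hmono k (left_mem_Icc.mpr hle.le) (right_mem_Icc.mpr hle.le) hle.le
      linarith
  intro s hs
  -- find k with t k ≤ s ≤ t (k+1)
  have hex : ∃ k, s < t k := by
    rcases (httop.eventually (eventually_gt_atTop s)).exists with ⟨k, hk⟩
    exact ⟨k, hk⟩
  classical
  set k0 := Nat.find hex with hk0
  have hk0spec : s < t k0 := Nat.find_spec hex
  have hk0pos : k0 ≠ 0 := by
    intro h0
    rw [h0, ht0] at hk0spec
    exact absurd hk0spec (not_lt.mpr hs)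
  obtain ⟨k, hk⟩ := Nat.exists_eq_succ_of_ne_zero hk0pos
  rw [hk] at hk0spec
  have hks : t k ≤ s := le_of_not_gt (by
    have := Nat.find_min hex (m := k)
    rw [← hk0, hk] at this
    exact this (Nat.lt_succ_self k))
  have hmem : s ∈ Icc (t k) (t (k + 1)) := ⟨hks, hk0spec.le⟩
  have hzs : 0 ≤ z s :=
    le_trans (hzk k) (hmono k (left_mem_Icc.mpr (le_trans hks hk0spec.le)) hmem hks)
  have hepos : 0 < Real.exp (γ * s) := Real.exp_pos _
  have hzs' : 0 ≤ Real.exp (γ * s) * h (x s) := hzs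
  nlinarith [hzs', hepos]
end
end

section
/- (Proposition 1, relative degree 1.) Let x be a closed-loop trajectory of the sampled-data control-affine system with h(x(0)) ≥ 0. Suppose that for each k ∈ ℕ there exist a set S_k ⊆ ℝⁿ (an over-approximation of the reachable tube over the sampling interval) and a real margin φ_k such that: (i) x(t) ∈ S_k for all t ∈ [t_k, t_{k+1}]; (ii) ξ(x′, u) − ξ(x_k, u) ≥ φ_k for every x′ ∈ S_k and every u ∈ U; and (iii) the applied input satisfies u_k ∈ U and the sampled-data CBF condition ξ(x_k, u_k) + φ_k ≥ 0, i.e. L_f h(x_k) + L_g h(x_k) u_k + γ h(x_k) + φ_k ≥ 0. Then h(x(t)) ≥ 0 for all t ≥ 0. -/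
open Set Filter

noncomputable section

/-- Proposition 1 (relative degree 1): if on each sampling interval the trajectory stays in a
set `S k` over which `ξ(·,u) - ξ(x_k,u)` is bounded below by a margin `φ k` uniformly in
`u ∈ U`, and the applied input satisfies the sampled-data CBF condition
`ξ(x_k, u_k) + φ k ≥ 0`, then `h(x(t)) ≥ 0` for all `t ≥ 0` whenever `h(x(0)) ≥ 0`. -/
theorem stmt_2 {n m : ℕ} (f : E n → E n) (g : E n → E m →L[ℝ] E n)
    (hf : LocallyLipschitz f) (hg : LocallyLipschitz g)
    (U : Set (E m)) (h : E n → ℝ) (hh : ContDiff ℝ 1 h) (γ : ℝ) (hγ : 0 < γ)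
    (t : ℕ → ℝ) (ht0 : t 0 = 0) (htmono : StrictMono t)
    (httop : Tendsto t atTop atTop)
    (u : ℕ → E m)
    (x : ℝ → E n) (hxc : ContinuousOn x (Ici (0 : ℝ)))
    (hode : ∀ k, ∀ s ∈ Ioo (t k) (t (k + 1)),
      HasDerivAt x (f (x s) + g (x s) (u k)) s)
    (hinit : 0 ≤ h (x 0))
    (S : ℕ → Set (E n)) (φ : ℕ → ℝ)
    (hreach : ∀ k, ∀ s ∈ Icc (t k) (t (k + 1)), x s ∈ S k)
    (hmargin : ∀ k, ∀ x' ∈ S k, ∀ v ∈ U,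
      φ k ≤ xi f g h γ x' v - xi f g h γ (x (t k)) v)
    (huU : ∀ k, u k ∈ U)
    (hcbf : ∀ k, 0 ≤ xi f g h γ (x (t k)) (u k) + φ k) :
    ∀ s, 0 ≤ s → 0 ≤ h (x s) := by
  have hdiff : Differentiable ℝ h := hh.differentiable one_ne_zero
  have ht0le : ∀ k, 0 ≤ t k := by
    intro k
    rw [← ht0]
    exact htmono.monotone (Nat.zero_le k)
  -- auxiliary function z
  set z : ℝ → ℝ := fun s => h (x s) * Real.exp (γ * s) with hz
  -- on each interval, z is monotone
  have hmono : ∀ k, MonotoneOn z (Icc (t k) (t (k+1))) := by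
    intro k
    have hsub : Icc (t k) (t (k+1)) ⊆ Ici (0 : ℝ) := fun s hs => le_trans (ht0le k) hs.1
    have hcont : ContinuousOn z (Icc (t k) (t (k+1))) :=
      ((hh.continuous.comp_continuousOn (hxc.mono hsub)).mul
        (Real.continuous_exp.comp (continuous_const.mul continuous_id)).continuousOn)
    have hderiv : ∀ s ∈ Ioo (t k) (t (k+1)),
        HasDerivAt z (Real.exp (γ * s) * xi f g h γ (x s) (u k)) s := by
      intro s hs
      have hx' := hode k s hs
      have hhx : HasDerivAt (fun s => h (x s))
          (fderiv ℝ h (x s) (f (x s) + g (x s) (u k))) s :=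
        (hdiff (x s)).hasFDerivAt.comp_hasDerivAt s hx'
      have hexp := ((hasDerivAt_id s).const_mul γ).exp
      have : HasDerivAt z _ s := hhx.mul hexp
      convert this using 1
      simp only [xi, map_add, id]
      ring
    have hderivnn : ∀ s ∈ interior (Icc (t k) (t (k+1))), 0 ≤ deriv z s := by
      rw [interior_Icc]
      intro s hs
      rw [(hderiv s hs).deriv]
      have hxS : x s ∈ S k := hreach k s ⟨hs.1.le, hs.2.le⟩
      have h1 := hmargin k (x s) hxS (u k) (huU k)
      have h2 := hcbf k
      have : (0:ℝ) ≤ xi f g h γ (x s) (u k) := by linarith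
      positivity
    exact monotoneOn_of_deriv_nonneg (convex_Icc _ _) hcont
      (fun s hs => by rw [interior_Icc] at hs; exact (hderiv s hs).differentiableAt.differentiableWithinAt)
      hderivnn
  -- z nonneg on each interval by induction
  have hzinit : 0 ≤ z (t 0) := by
    rw [ht0]
    positivity
  have key : ∀ k, ∀ s ∈ Icc (t k) (t (k+1)), 0 ≤ z s := by
    have hk : ∀ k, 0 ≤ z (t k) := by
      intro k
      induction k with
      | zero => exact hzinit
      | succ j ih =>
        have := hmono j (left_mem_Icc.2 (htmono (Nat.lt_succ_self j)).le)
          (right_mem_Icc.2 (htmono (Nat.lt_succ_self j)).le) (htmono (Nat.lt_succ_self j)).le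
        linarith [ih]
    intro k s hs
    have := hmono k (left_mem_Icc.2 (htmono (Nat.lt_succ_self k)).le) hs hs.1
    linarith [hk k]
  -- conclusion
  intro s hs
  have hex : ∃ N, s < t N := by
    rcases (httop.eventually (eventually_gt_atTop s)).exists with ⟨N, hN⟩
    exact ⟨N, hN⟩
  classical
  have hsN : s < t (Nat.find hex) := Nat.find_spec hex
  have hN0 : Nat.find hex ≠ 0 := by
    intro h0
    rw [h0, ht0] at hsN
    exact absurd hsN (not_lt.2 hs)
  obtain ⟨j, hj⟩ := Nat.exists_eq_succ_of_ne_zero hN0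
  rw [hj] at hsN
  have hjs : t j ≤ s := by
    by_contra hc
    exact Nat.find_min hex (hj ▸ Nat.lt_succ_self j) (not_le.1 hc)
  have hzs : 0 ≤ z s := key j s ⟨hjs, hsN.le⟩
  have hexp : 0 < Real.exp (γ * s) := Real.exp_pos _
  simp only [hz] at hzs
  nlinarith [hzs, hexp]
end
end

section
/- (Corollary 1, Taylor-model margin with an arbitrary lower bound.) Let x be a closed-loop trajectory of the sampled-data control-affine system with h(x(0)) ≥ 0. Suppose that for each k ∈ ℕ there exist a set S_k ⊆ ℝⁿ with x(t) ∈ S_k for all t ∈ [t_k, t_{k+1}], a point (x_k*, u_k*) ∈ S_k × U, a function P_k : ℝⁿ × ℝᵐ → ℝ (the Taylor polynomial) and real numbers I̲_k (lower bound of the remainder interval) and φ̲_k such that: (i) ξ(x′, u) − ξ(x_k, u) ≥ P_k(x′ − x_k*, u − u_k*) + I̲_k for every (x′, u) ∈ S_k × U; (ii) φ̲_k ≤ P_k(x′ − x_k*, u − u_k*) for every (x′, u) ∈ S_k × U; and (iii) the applied input satisfies u_k ∈ U and ξ(x_k, u_k) + I̲_k + φ̲_k ≥ 0. Then h(x(t))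 ≥ 0 for all t ≥ 0. -/
open Set Filter

noncomputable section

/-- Corollary 1 (Taylor-model margin with an arbitrary lower bound): if on each sampling
interval the trajectory stays in `S k`, the increment `ξ(x',u) - ξ(x_k,u)` is bounded below
by a Taylor model `P k (x' - x_k*) (u - u_k*) + I̲ k` on `S k × U`, `φ̲ k` is any lower
bound of the Taylor polynomial on `S k × U`, and the applied input satisfies
`ξ(x_k, u_k) + I̲ k + φ̲ k ≥ 0`, then `h(x(t)) ≥ 0` for all `t ≥ 0` whenever
`h(x(0)) ≥ 0`. -/
theorem stmt_3 {n m : ℕ} (f : E n → E n) (g : E n → E m →L[ℝ] E n)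
    (hf : LocallyLipschitz f) (hg : LocallyLipschitz g)
    (U : Set (E m)) (h : E n → ℝ) (hh : ContDiff ℝ 1 h) (γ : ℝ) (hγ : 0 < γ)
    (t : ℕ → ℝ) (ht0 : t 0 = 0) (htmono : StrictMono t)
    (httop : Tendsto t atTop atTop)
    (u : ℕ → E m)
    (x : ℝ → E n) (hxc : ContinuousOn x (Ici (0 : ℝ)))
    (hode : ∀ k, ∀ s ∈ Ioo (t k) (t (k + 1)),
      HasDerivAt x (f (x s) + g (x s) (u k)) s)
    (hinit : 0 ≤ h (x 0))
    (S : ℕ → Set (E n))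
    (xstar : ℕ → E n) (ustar : ℕ → E m)
    (P : ℕ → E n → E m → ℝ) (Ilow : ℕ → ℝ) (φlow : ℕ → ℝ)
    (hreach : ∀ k, ∀ s ∈ Icc (t k) (t (k + 1)), x s ∈ S k)
    (hstar : ∀ k, xstar k ∈ S k ∧ ustar k ∈ U)
    (htaylor : ∀ k, ∀ x' ∈ S k, ∀ v ∈ U,
      P k (x' - xstar k) (v - ustar k) + Ilow k
        ≤ xi f g h γ x' v - xi f g h γ (x (t k)) v)
    (hpolylb : ∀ k, ∀ x' ∈ S k, ∀ v ∈ U,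
      φlow k ≤ P k (x' - xstar k) (v - ustar k))
    (huU : ∀ k, u k ∈ U)
    (hcbf : ∀ k, 0 ≤ xi f g h γ (x (t k)) (u k) + Ilow k + φlow k) :
    ∀ s, 0 ≤ s → 0 ≤ h (x s) := by
  -- t k is nonnegative and t k ≤ t (k+1)
  have htnn : ∀ k, 0 ≤ t k := fun k => ht0 ▸ htmono.monotone (Nat.zero_le k)
  have hhd : Differentiable ℝ h := hh.differentiable one_ne_zero
  -- the auxiliary function y s = h (x s) * exp (γ s)
  set y : ℝ → ℝ := fun s => h (x s) * Real.exp (γ * s) with hy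
  -- key: on each interval [t k, t (k+1)], if 0 ≤ h (x (t k)) then 0 ≤ h (x s) for all s in it
  have key : ∀ k, 0 ≤ h (x (t k)) → ∀ s ∈ Icc (t k) (t (k + 1)), 0 ≤ h (x s) := by
    intro k hk s hs
    have hlt : t k < t (k + 1) := htmono (Nat.lt_succ_self k)
    have hmono : MonotoneOn y (Icc (t k) (t (k + 1))) := by
      apply monotoneOn_of_hasDerivWithinAt_nonneg (convex_Icc _ _)
        (f' := fun s => xi f g h γ (x s) (u k) * Real.exp (γ * s))
      · have hxsub : Icc (t k) (t (k+1)) ⊆ Ici (0:ℝ) := fun a ha => le_trans (htnn k) ha.1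
        exact (hh.continuous.comp_continuousOn (hxc.mono hxsub)).mul
          (Continuous.continuousOn (by continuity))
      · intro s hs'
        rw [interior_Icc] at hs'
        have hx' := hode k s hs'
        have hD : HasDerivAt (fun s => h (x s))
            (fderiv ℝ h (x s) (f (x s) + g (x s) (u k))) s :=
          (hhd (x s)).hasFDerivAt.comp_hasDerivAt s hx'
        have hE : HasDerivAt (fun s => Real.exp (γ * s)) (γ * Real.exp (γ * s)) s := by
          exact ((Real.hasDerivAt_exp (γ * s)).comp s
            ((hasDerivAt_id s).const_mul γ)).congr_deriv (by simp [mul_comm])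
        have := hD.mul hE
        apply HasDerivAt.hasDerivWithinAt
        refine this.congr_deriv ?_
        simp only [xi, map_add]
        ring
      · intro s hs'
        rw [interior_Icc] at hs'
        have hsmem : x s ∈ S k := hreach k s (Ioo_subset_Icc_self hs')
        have h1 := htaylor k (x s) hsmem (u k) (huU k)
        have h2 := hpolylb k (x s) hsmem (u k) (huU k)
        have h3 := hcbf k
        have : 0 ≤ xi f g h γ (x s) (u k) := by linarith
        positivity
    have := hmono (left_mem_Icc.2 hlt.le) hs hs.1
    have hy0 : 0 ≤ y (t k) := mul_nonneg hk (Real.exp_pos _).le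
    have hys : 0 ≤ y s := le_trans hy0 this
    simp only [hy] at hys
    nlinarith [Real.exp_pos (γ * s)]
  -- by induction, h (x (t k)) ≥ 0 for all k
  have hind : ∀ k, 0 ≤ h (x (t k)) := by
    intro k
    induction k with
    | zero => simpa [ht0] using hinit
    | succ k ih =>
        exact key k ih (t (k + 1)) (right_mem_Icc.2 (htmono (Nat.lt_succ_self k)).le)
  -- for arbitrary s ≥ 0, find k with t k ≤ s < t (k+1)
  intro s hs
  have hex : ∃ N, s < t N := by
    rcases (httop.eventually (eventually_gt_atTop s)).exists with ⟨N, hN⟩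
    exact ⟨N, hN⟩
  classical
  let K := Nat.find hex
  have hK : s < t K := Nat.find_spec hex
  have hKpos : 0 < K := by
    rcases Nat.eq_zero_or_pos K with h0 | h0
    · exfalso; have := hK; rw [h0, ht0] at this; linarith
    · exact h0
  have hle : t (K - 1) ≤ s := by
    by_contra hlt
    exact Nat.find_min hex (Nat.sub_lt hKpos one_pos) (not_le.mp hlt)
  have : s ∈ Icc (t (K - 1)) (t (K - 1 + 1)) := by
    constructor
    · exact hle
    · rw [Nat.sub_add_cancel hKpos]; exact hK.le
  exact key (K - 1) (hind (K - 1)) s this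
end
end

section
/- (Cascaded comparison lemma.) Let r ≥ 1, let λ_1, …, λ_r > 0, and let s_0, …, s_{r−1} : [0,∞) → ℝ be continuous functions. Suppose there is a countable set D ⊂ (0,∞) such that each s_k is differentiable at every t ∈ (0,∞) \ D and, for every such t: s_k(t) = s_{k−1}′(t) + λ_k s_{k−1}(t) for k = 1, …, r−1, and s_{r−1}′(t) + λ_r s_{r−1}(t) ≥ 0. If s_k(0) ≥ 0 for every k = 0, …, r−1, then s_0(t) ≥ 0 for all t ≥ 0. -/
open Set

open Filter in

/-- A continuous function on `[0,∞)` whose derivative is nonnegative off a countable set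
is monotone. -/
lemma mono_aux (g : ℝ → ℝ) (D : Set ℝ) (hD : D.Countable)
    (hg : ContinuousOn g (Ici (0:ℝ)))
    (hdiff : ∀ t ∈ Ioi (0:ℝ) \ D, DifferentiableAt ℝ g t)
    (hderiv : ∀ t ∈ Ioi (0:ℝ) \ D, 0 ≤ deriv g t) :
    ∀ a b : ℝ, 0 ≤ a → a ≤ b → g a ≤ g b := by
  have key : ∀ ε : ℝ, 0 < ε → ∀ a b : ℝ, 0 < a → a ≤ b →
      g a + ε * a ≤ g b + ε * b := by
    intro ε hε a b ha hab
    set G : ℝ → ℝ := fun t => g t + ε * t with hGdef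
    have hGcont : ContinuousOn G (Icc a b) :=
      (hg.mono (fun t ht => le_trans ha.le ht.1 : Icc a b ⊆ Ici 0)).add
        ((continuous_const.mul continuous_id).continuousOn)
    by_contra hcon
    push_neg at hcon
    have hab' : a < b := by
      rcases eq_or_lt_of_le hab with rfl | h
      · exact absurd rfl (ne_of_gt hcon)
      · exact h
    have hNotSub : ¬ (Ioo (G b) (G a) ⊆ G '' D) := by
      intro hsub
      have h0 : (MeasureTheory.volume (Ioo (G b) (G a))) = 0 :=
        MeasureTheory.measure_mono_null hsub ((hD.image G).measure_zero _)
      rw [Real.volume_Ioo] at h0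
      rw [ENNReal.ofReal_eq_zero] at h0
      simp only [hGdef] at h0
      linarith
    obtain ⟨c, hcmem, hcnot⟩ := not_subset.1 hNotSub
    set S : Set ℝ := {t ∈ Icc a b | c ≤ G t} with hS
    have hSclosed : IsClosed S := by
      have hSeq : S = Icc a b ∩ G ⁻¹' (Ici c) := by
        ext t
        simp only [hS, mem_setOf_eq, mem_inter_iff, mem_preimage, mem_Ici]
      rw [hSeq]
      exact ContinuousOn.preimage_isClosed_of_isClosed hGcont isClosed_Icc isClosed_Ici
    have haS : a ∈ S := ⟨⟨le_rfl, hab⟩, hcmem.2.le⟩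
    have hSbdd : BddAbove S := ⟨b, fun t ht => ht.1.2⟩
    set x := sSup S with hx
    have hxS : x ∈ S := hSclosed.csSup_mem ⟨a, haS⟩ hSbdd
    have hxab : x ∈ Icc a b := hxS.1
    have hxlt : x < b := by
      rcases lt_or_eq_of_le hxab.2 with h | h
      · exact h
      · exfalso; have h2 := hxS.2; rw [h] at h2; exact absurd hcmem.1 (not_lt.2 h2)
    have hgt : ∀ t, x < t → t ≤ b → G t < c := by
      intro t hxt htb
      by_contra hge
      push_neg at hge
      have : t ∈ S := ⟨⟨le_trans hxab.1 hxt.le, htb⟩, hge⟩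
      exact absurd (le_csSup hSbdd this) (not_le.2 hxt)
    have hGx : G x = c := by
      refine le_antisymm ?_ hxS.2
      have hlim : Tendsto G (nhdsWithin x (Ioi x)) (nhds (G x)) := by
        have h1 : ContinuousWithinAt G (Icc a b) x := hGcont x hxab
        have h2 : nhdsWithin x (Ioi x) ≤ nhdsWithin x (Icc a b) := by
          rw [← nhdsWithin_Ioc_eq_nhdsGT hxlt]
          exact nhdsWithin_mono x (fun t ht => ⟨le_trans hxab.1 ht.1.le, ht.2⟩)
        exact h1.tendsto.mono_left h2
      refine le_of_tendsto hlim ?_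
      filter_upwards [Ioo_mem_nhdsGT_of_mem ⟨le_rfl, hxlt⟩] with t ht
      exact (hgt t ht.1 ht.2.le).le
    have hxD : x ∉ D := fun hmem => hcnot ⟨x, hmem, hGx⟩
    have hx0 : x ∈ Ioi (0:ℝ) := lt_of_lt_of_le ha hxab.1
    have hder : HasDerivAt G (deriv g x + ε) x := by
      have h1 : HasDerivAt g (deriv g x) x := (hdiff x ⟨hx0, hxD⟩).hasDerivAt
      have h2 : HasDerivAt (fun t : ℝ => ε * t) ε x := by
        simpa using (hasDerivAt_id x).const_mul ε
      exact h1.add h2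
    have hpos : 0 < deriv g x + ε := lt_of_lt_of_le hε (le_add_of_nonneg_left (hderiv x ⟨hx0, hxD⟩))
    have hslope : ∀ᶠ z in nhdsWithin x (Ioi x), 0 < slope G x z := by
      have := hasDerivAt_iff_tendsto_slope.1 hder
      have h2 : Tendsto (slope G x) (nhdsWithin x (Ioi x)) (nhds (deriv g x + ε)) :=
        this.mono_left (nhdsWithin_mono x (fun z hz => ne_of_gt hz))
      exact h2.eventually (eventually_gt_nhds hpos)
    obtain ⟨z, hz0, hz1⟩ :=
      (hslope.and (Ioc_mem_nhdsGT_of_mem ⟨le_rfl, hxlt⟩)).exists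
    have hzx : x < z := hz1.1
    have : 0 < G z - G x := by
      have := mul_pos hz0 (sub_pos.2 hzx)
      rwa [slope_def_field, div_mul_cancel₀] at this
      exact ne_of_gt (sub_pos.2 hzx)
    have hlt := hgt z hzx hz1.2
    rw [hGx] at this
    linarith
  -- drop ε
  have key2 : ∀ a b : ℝ, 0 < a → a ≤ b → g a ≤ g b := by
    intro a b ha hab
    refine le_of_forall_pos_le_add (fun δ hδ => ?_)
    have hd : (0:ℝ) < b - a + 1 := by linarith
    have hε : 0 < δ / (b - a + 1) := div_pos hδ hd
    have h := key _ hε a b ha hab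
    have h2 : δ / (b - a + 1) * (b - a) ≤ δ := by
      rw [div_mul_eq_mul_div, div_le_iff₀ hd]
      nlinarith
    nlinarith
  intro a b ha hab
  rcases eq_or_lt_of_le ha with rfl | ha'
  · rcases eq_or_lt_of_le hab with rfl | hb
    · exact le_refl _
    · have hlim : Tendsto g (nhdsWithin 0 (Ioi (0:ℝ))) (nhds (g 0)) :=
        (hg 0 self_mem_Ici).tendsto.mono_left (nhdsWithin_mono 0 Ioi_subset_Ici_self)
      refine le_of_tendsto hlim ?_
      filter_upwards [Ioc_mem_nhdsGT_of_mem ⟨le_rfl, hb⟩] with t ht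
      exact key2 t b ht.1 ht.2
  · exact key2 a b ha' hab

/-- Single-level comparison lemma. -/
lemma single_aux (f : ℝ → ℝ) (lam : ℝ) (D : Set ℝ) (hD : D.Countable)
    (hf : ContinuousOn f (Ici (0:ℝ)))
    (hdiff : ∀ t ∈ Ioi (0:ℝ) \ D, DifferentiableAt ℝ f t)
    (hineq : ∀ t ∈ Ioi (0:ℝ) \ D, 0 ≤ deriv f t + lam * f t)
    (h0 : 0 ≤ f 0) :
    ∀ t, 0 ≤ t → 0 ≤ f t := by
  set G : ℝ → ℝ := fun t => Real.exp (lam * t) * f t with hGdef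
  have hGcont : ContinuousOn G (Ici 0) :=
    ((Real.continuous_exp.comp (continuous_const.mul continuous_id)).continuousOn).mul hf
  have hGdiff : ∀ t ∈ Ioi (0:ℝ) \ D, HasDerivAt G
      (Real.exp (lam * t) * (deriv f t + lam * f t)) t := by
    intro t ht
    have h1 : HasDerivAt (fun u : ℝ => Real.exp (lam * u)) (lam * Real.exp (lam * t)) t := by
      have := (Real.hasDerivAt_exp (lam * t)).comp t ((hasDerivAt_id t).const_mul lam)
      simpa [mul_comm, Function.comp_def] using this
    have h2 : HasDerivAt f (deriv f t) t := (hdiff t ht).hasDerivAt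
    have : HasDerivAt G (lam * Real.exp (lam * t) * f t + Real.exp (lam * t) * deriv f t) t := h1.mul h2
    convert this using 1
    ring
  have hmono := mono_aux G D hD hGcont
    (fun t ht => (hGdiff t ht).differentiableAt)
    (fun t ht => by
      rw [(hGdiff t ht).deriv]
      exact mul_nonneg (Real.exp_pos _).le (hineq t ht))
  intro t ht
  have := hmono 0 t le_rfl ht
  have hG0 : G 0 = f 0 := by simp [hGdef]
  have hGt : G t = Real.exp (lam * t) * f t := rfl
  have hpos : 0 < Real.exp (lam * t) := Real.exp_pos _
  nlinarith [hmono 0 t le_rfl ht]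

/-- Cascaded (higher-order) comparison lemma: let `s 0, …, s (r-1)` be continuous on
`[0,∞)`, differentiable on `(0,∞)` outside a countable set `D`, and suppose that at every
such point `s k = (s (k-1))' + λ_k * s (k-1)` for `k = 1, …, r-1` and
`(s (r-1))' + λ_r * s (r-1) ≥ 0`. If `s k 0 ≥ 0` for all `k = 0, …, r-1`, then
`s 0 t ≥ 0` for all `t ≥ 0`. -/
theorem stmt_4 (r : ℕ) (hr : 1 ≤ r) (lam : ℕ → ℝ)
    (hlam : ∀ k, 1 ≤ k → k ≤ r → 0 < lam k)
    (s : ℕ → ℝ → ℝ)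
    (hcont : ∀ k < r, ContinuousOn (s k) (Ici (0 : ℝ)))
    (D : Set ℝ) (hDcount : D.Countable) (hDsub : D ⊆ Ioi (0 : ℝ))
    (hdiff : ∀ k < r, ∀ t ∈ Ioi (0 : ℝ) \ D, DifferentiableAt ℝ (s k) t)
    (hrec : ∀ k, 1 ≤ k → k ≤ r - 1 → ∀ t ∈ Ioi (0 : ℝ) \ D,
      s k t = deriv (s (k - 1)) t + lam k * s (k - 1) t)
    (htop : ∀ t ∈ Ioi (0 : ℝ) \ D,
      0 ≤ deriv (s (r - 1)) t + lam r * s (r - 1) t)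
    (hinit : ∀ k < r, 0 ≤ s k 0) :
    ∀ t, 0 ≤ t → 0 ≤ s 0 t := by
  have main : ∀ j, j ≤ r - 1 → ∀ t, 0 ≤ t → 0 ≤ s (r - 1 - j) t := by
    intro j
    induction j with
    | zero =>
      intro _
      have hk : r - 1 < r := by omega
      simpa using single_aux (s (r - 1)) (lam r) D hDcount (hcont _ hk) (hdiff _ hk)
        htop (hinit _ hk)
    | succ j ih =>
      intro hj
      have hj' : j ≤ r - 1 := Nat.le_of_succ_le hj
      have ihs := ih hj'
      have hk1 : (r - 1 - (j + 1)) + 1 = r - 1 - j := by omega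
      have hkr : r - 1 - (j + 1) < r := by omega
      refine single_aux (s (r - 1 - (j + 1))) (lam (r - 1 - (j + 1) + 1)) D hDcount
        (hcont _ hkr) (hdiff _ hkr) ?_ (hinit _ hkr)
      intro t' ht'
      have hrec' := hrec (r - 1 - (j + 1) + 1) (by omega) (by omega) t' ht'
      simp only [Nat.add_sub_cancel] at hrec'
      have h2 : 0 ≤ s (r - 1 - (j + 1) + 1) t' := by
        rw [hk1]; exact ihs t' (le_of_lt ht'.1)
      rw [hrec'] at h2
      exact h2
  have := main (r - 1) le_rfl
  simpa using this
end

section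
/- Let f : ℝⁿ → ℝⁿ be of class C^{r−1}, g : ℝⁿ → ℝ^{n×m}, and h : ℝⁿ → ℝ of class C^r with relative degree r with respect to (f,g), i.e. L_g L_f^k h(x) = ∇(L_f^k h)(x)ᵀ g(x) = 0 for all x ∈ ℝⁿ and all k = 0, …, r−2. Fix λ_1, …, λ_r > 0, let a = (a_1, …, a_r) with a_i the i-th elementary symmetric polynomial of λ_1, …, λ_r, let η(x) = (L_f^{r−1}h(x), L_f^{r−2}h(x), …, h(x))ᵀ, and define s_0 = h, s_k = L_f s_{k−1} + λ_k s_{k−1} for k = 1, …, r−1. Then for every x ∈ ℝⁿ and every u ∈ ℝᵐ: L_f s_{r−1}(x) + L_g s_{r−1}(x)·u + λ_r s_{r−1}(x) = L_f^r h(x) + L_g L_f^{r−1} h(x)·u + aᵀη(x). -/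
open Set

noncomputable section

/-- Iterated Lie derivative along `f`: `L_f^0 h = h`, `L_f^{k+1} h (x) = ∇(L_f^k h)(x)·f(x)`. -/
noncomputable def lieIter {n : ℕ} (f : E n → E n) (h : E n → ℝ) : ℕ → E n → ℝ
  | 0 => h
  | k + 1 => fun p => fderiv ℝ (lieIter f h k) p (f p)

/-- The cascaded functions `s_0 = h`, `s_k = L_f s_{k-1} + λ_k s_{k-1}` (using `lam k` as
`λ_k`). -/
noncomputable def cascade {n : ℕ} (f : E n → E n) (h : E n → ℝ) (lam : ℕ → ℝ) :
    ℕ → E n → ℝ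
  | 0 => h
  | k + 1 => fun p =>
      fderiv ℝ (cascade f h lam k) p (f p) + lam (k + 1) * cascade f h lam k p

/-- `esym lam k j` is the `j`-th elementary symmetric polynomial `e_j(λ_1, …, λ_k)`
(so `esym lam k 0 = 1`). -/
noncomputable def esym (lam : ℕ → ℝ) (k j : ℕ) : ℝ :=
  ∑ S ∈ (Finset.Icc 1 k).powersetCard j, ∏ i ∈ S, lam i

lemma esym_zero (lam : ℕ → ℝ) (k : ℕ) : esym lam k 0 = 1 := by
  simp [esym]

lemma esym_eq_zero (lam : ℕ → ℝ) {k j : ℕ} (h : k < j) : esym lam k j = 0 := by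
  rw [esym, Finset.powersetCard_eq_empty.mpr (by simpa using h), Finset.sum_empty]

lemma esym_succ (lam : ℕ → ℝ) (k j : ℕ) :
    esym lam (k + 1) (j + 1) = esym lam k (j + 1) + lam (k + 1) * esym lam k j := by
  have hins : Finset.Icc 1 (k + 1) = insert (k + 1) (Finset.Icc 1 k) := by
    rw [← Finset.insert_Icc_right_eq_Icc_add_one (by omega)]
  have hnot : (k + 1) ∉ Finset.Icc 1 k := by simp
  rw [esym, hins, Finset.powersetCard_succ_insert hnot, Finset.sum_union, esym, esym,
    Finset.sum_image, Finset.mul_sum]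
  · congr 1
    refine Finset.sum_congr rfl fun S hS => ?_
    rw [Finset.prod_insert]
    intro hmem
    exact hnot (Finset.mem_powersetCard.mp hS |>.1 hmem)
  · intro S hS T hT hST
    have hS' := Finset.mem_powersetCard.mp hS |>.1
    have hT' := Finset.mem_powersetCard.mp hT |>.1
    ext x
    constructor <;> intro hx
    · have : x ∈ insert (k+1) T := hST ▸ Finset.mem_insert_of_mem hx
      rcases Finset.mem_insert.mp this with h | h
      · exact absurd (h ▸ hx) (fun hh => hnot (hS' hh))
      · exact h
    · have : x ∈ insert (k+1) S := hST ▸ Finset.mem_insert_of_mem hx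
      rcases Finset.mem_insert.mp this with h | h
      · exact absurd (h ▸ hx) (fun hh => hnot (hT' hh))
      · exact h
  · rw [Finset.disjoint_right]
    intro S hS hS'
    have h1 : (k+1) ∈ S := by
      obtain ⟨T, hT, rfl⟩ := Finset.mem_image.mp hS
      exact Finset.mem_insert_self _ _
    exact hnot (Finset.mem_powersetCard.mp hS' |>.1 h1)

lemma key (lam : ℕ → ℝ) (k : ℕ) (L : ℕ → ℝ) :
    ∑ i ∈ Finset.range (k + 1), esym lam k (k - i) * L (i + 1)
      + lam (k + 1) * ∑ i ∈ Finset.range (k + 1), esym lam k (k - i) * L i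
    = ∑ i ∈ Finset.range (k + 2), esym lam (k + 1) (k + 1 - i) * L i := by
  have h1 : ∑ i ∈ Finset.range (k + 1), esym lam k (k - i) * L (i + 1)
      = ∑ i ∈ Finset.range (k + 2), esym lam k (k + 1 - i) * L i := by
    rw [Finset.sum_range_succ' (fun i => esym lam k (k + 1 - i) * L i)]
    simp only [Nat.succ_sub_succ]
    rw [Nat.sub_zero, esym_eq_zero lam (Nat.lt_succ_self k), zero_mul, add_zero]
  rw [h1, Finset.sum_range_succ (fun i => esym lam k (k + 1 - i) * L i),
    Finset.sum_range_succ (fun i => esym lam (k + 1) (k + 1 - i) * L i)]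
  have htop : esym lam k (k + 1 - (k + 1)) * L (k + 1)
      = esym lam (k + 1) (k + 1 - (k + 1)) * L (k + 1) := by
    simp [esym_zero]
  have hmain : ∑ i ∈ Finset.range (k + 1), esym lam k (k + 1 - i) * L i
      + lam (k + 1) * ∑ i ∈ Finset.range (k + 1), esym lam k (k - i) * L i
      = ∑ i ∈ Finset.range (k + 1), esym lam (k + 1) (k + 1 - i) * L i := by
    rw [Finset.mul_sum, ← Finset.sum_add_distrib]
    refine Finset.sum_congr rfl fun i hi => ?_
    have hik : i ≤ k := Nat.lt_succ_iff.mp (Finset.mem_range.mp hi)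
    have h2 : k + 1 - i = (k - i) + 1 := by omega
    rw [h2, esym_succ]
    ring
  linarith

lemma contDiff_lieIter {n : ℕ} {r : ℕ} {f : E n → E n} {h : E n → ℝ}
    (hf : ContDiff ℝ ((r - 1 : ℕ) : WithTop ℕ∞) f) (hh : ContDiff ℝ ((r : ℕ) : WithTop ℕ∞) h) :
    ∀ i, i ≤ r → ContDiff ℝ ((r - i : ℕ) : WithTop ℕ∞) (lieIter f h i) := by
  intro i
  induction i with
  | zero => intro _; simpa [lieIter] using hh
  | succ i ih =>
    intro hir
    have H := ih (by omega)
    have h1 : ((r - (i + 1) : ℕ) : WithTop ℕ∞) + 1 ≤ ((r - i : ℕ) : WithTop ℕ∞) := by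
      have : (r - (i + 1)) + 1 = r - i := by omega
      exact_mod_cast le_of_eq this
    have hF := H.fderiv_right h1
    have hfle : ContDiff ℝ ((r - (i + 1) : ℕ) : WithTop ℕ∞) f :=
      hf.of_le (by exact_mod_cast Nat.cast_le.mpr (by omega : r - (i + 1) ≤ r - 1))
    exact hF.clm_apply hfle

lemma fderiv_sum_mul {n : ℕ} (N : ℕ) (c : ℕ → ℝ) (F : ℕ → E n → ℝ) (p : E n)
    (hF : ∀ i ∈ Finset.range N, DifferentiableAt ℝ (F i) p) (w : E n) :
    fderiv ℝ (fun q => ∑ i ∈ Finset.range N, c i * F i q) p w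
      = ∑ i ∈ Finset.range N, c i * fderiv ℝ (F i) p w := by
  rw [fderiv_fun_sum (fun i hi => (hF i hi).const_mul (c i)), ContinuousLinearMap.sum_apply]
  refine Finset.sum_congr rfl fun i hi => ?_
  rw [fderiv_const_mul (hF i hi)]
  simp

/-- If `h` has relative degree `r` with respect to `(f,g)` (i.e. `L_g L_f^k h ≡ 0` for
`k = 0, …, r-2`), then one application of `(L_f + L_g(·)u + λ_r)` to the cascaded function
`s_{r-1}` equals the higher-order CBF expression
`L_f^r h(x) + L_g L_f^{r-1} h(x) u + aᵀη(x)`, where `a_i = e_i(λ_1, …, λ_r)` and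
`aᵀη(x) = Σ_{i=0}^{r-1} e_{r-i}(λ_1, …, λ_r) · L_f^i h(x)`. -/
theorem stmt_6 {n m : ℕ} (r : ℕ) (hr : 1 ≤ r)
    (f : E n → E n) (hf : ContDiff ℝ (r - 1 : ℕ) f)
    (g : E n → E m →L[ℝ] E n)
    (h : E n → ℝ) (hh : ContDiff ℝ (r : ℕ) h)
    (lam : ℕ → ℝ) (hlam : ∀ i, 1 ≤ i → i ≤ r → 0 < lam i)
    (hreldeg : ∀ k, k + 2 ≤ r → ∀ p : E n, ∀ v : E m,
      fderiv ℝ (lieIter f h k) p (g p v) = 0) :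
    ∀ (p : E n) (v : E m),
      fderiv ℝ (cascade f h lam (r - 1)) p (f p)
          + fderiv ℝ (cascade f h lam (r - 1)) p (g p v)
          + lam r * cascade f h lam (r - 1) p
        = lieIter f h r p + fderiv ℝ (lieIter f h (r - 1)) p (g p v)
          + ∑ i ∈ Finset.range r, esym lam r (r - i) * lieIter f h i p := by
  have hdiff : ∀ i, i < r → Differentiable ℝ (lieIter f h i) := by
    intro i hi
    refine (contDiff_lieIter hf hh i (le_of_lt hi)).differentiable ?_
    exact_mod_cast (by omega : r - i ≠ 0)
  have hcasc : ∀ k, k + 1 ≤ r → cascade f h lam k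
      = fun p => ∑ i ∈ Finset.range (k + 1), esym lam k (k - i) * lieIter f h i p := by
    intro k
    induction k with
    | zero =>
      intro _
      funext p
      simp [cascade, lieIter, esym_zero]
    | succ k ih =>
      intro hk2
      funext p
      have hc := ih (by omega)
      show fderiv ℝ (cascade f h lam k) p (f p) + lam (k + 1) * cascade f h lam k p = _
      rw [hc, fderiv_sum_mul (k + 1) _ _ p
        (fun i hi => (hdiff i (by
          have := Finset.mem_range.mp hi; omega)).differentiableAt) (f p)]
      exact key lam k (fun j => lieIter f h j p)
  obtain ⟨k, rfl⟩ : ∃ k, r = k + 1 := ⟨r - 1, by omega⟩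
  simp only [Nat.add_sub_cancel]
  intro p v
  rw [hcasc k le_rfl, fderiv_sum_mul (k + 1) _ _ p
      (fun i hi => (hdiff i (by have := Finset.mem_range.mp hi; omega)).differentiableAt) (f p),
    fderiv_sum_mul (k + 1) _ _ p
      (fun i hi => (hdiff i (by have := Finset.mem_range.mp hi; omega)).differentiableAt) (g p v)]
  have hB : ∑ i ∈ Finset.range (k + 1), esym lam k (k - i) * fderiv ℝ (lieIter f h i) p (g p v)
      = fderiv ℝ (lieIter f h k) p (g p v) := by
    rw [Finset.sum_range_succ, Finset.sum_eq_zero, Nat.sub_self, esym_zero, zero_add, one_mul]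
    intro i hi
    rw [hreldeg i (by have := Finset.mem_range.mp hi; omega) p v, mul_zero]
  have hkey := key lam k (fun j => lieIter f h j p)
  rw [Finset.sum_range_succ (fun i => esym lam (k + 1) (k + 1 - i) * lieIter f h i p),
    Nat.sub_self, esym_zero, one_mul] at hkey
  simp only [lieIter] at hkey ⊢
  rw [hB]
  linarith
end
end

section
/- (Safety of the USDCBF-QP controller, relative degree 1, under measurement and actuation uncertainties.) Let x be a closed-loop trajectory of the sampled-data control-affine system. Let ε_x, ε_u > 0. Suppose that for each k ∈ ℕ there exist a state estimate x̂_k ∈ ℝⁿ with ‖x(t_k) − x̂_k‖₂ ≤ ε_x, a set Ŝ_k ⊆ ℝⁿ with x(t) ∈ Ŝ_k for all t ∈ [t_k, t_{k+1}], a real margin φ̂_k with ξ(x′, u) − ξ(x̂_k, u) ≥ φ̂_k for every x′ ∈ Ŝ_k and every u ∈ U, and a desired input u^d_k such that every u ∈ ℝᵐ with ‖u − u^d_k‖₂ ≤ ε_u satisfies u ∈ U and ξ(x̂_k, u) + φ̂_k ≥ 0, i.e. L_f h(x̂_k) + L_g h(x̂_k) u + γ h(x̂_k) + φ̂_k ≥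 0. Suppose the actually applied input satisfies ‖u_k − u^d_k‖₂ ≤ ε_u for every k, and that h(x) ≥ 0 for every x ∈ ℝⁿ with ‖x − x̂_0‖₂ ≤ ε_x. Then h(x(t)) ≥ 0 for all t ≥ 0. -/
open Set Filter

noncomputable section

/-- Safety of the USDCBF-QP controller (relative degree 1) under measurement and actuation
uncertainties: with state estimates `x̂ k` accurate to `ε_x`, reachable-tube
over-approximations `Ŝ k`, margins `φ̂ k`, and desired inputs `ud k` such that every input
within `ε_u` of `ud k` lies in `U` and satisfies `ξ(x̂_k, ·) + φ̂ k ≥ 0`, the actually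
applied inputs `u k` (within `ε_u` of `ud k`) keep `h(x(t)) ≥ 0` for all `t ≥ 0`,
provided `h ≥ 0` on the `ε_x`-ball around the initial estimate `x̂ 0`. -/
theorem stmt_10 {n m : ℕ} (f : E n → E n) (g : E n → E m →L[ℝ] E n)
    (hf : LocallyLipschitz f) (hg : LocallyLipschitz g)
    (U : Set (E m)) (h : E n → ℝ) (hh : ContDiff ℝ 1 h) (γ : ℝ) (hγ : 0 < γ)
    (t : ℕ → ℝ) (ht0 : t 0 = 0) (htmono : StrictMono t)
    (httop : Tendsto t atTop atTop)
    (u : ℕ → E m)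
    (x : ℝ → E n) (hxc : ContinuousOn x (Ici (0 : ℝ)))
    (hode : ∀ k, ∀ s ∈ Ioo (t k) (t (k + 1)),
      HasDerivAt x (f (x s) + g (x s) (u k)) s)
    (εx εu : ℝ) (hεx : 0 < εx) (hεu : 0 < εu)
    (xhat : ℕ → E n) (hmeas : ∀ k, ‖x (t k) - xhat k‖ ≤ εx)
    (Shat : ℕ → Set (E n))
    (hreach : ∀ k, ∀ s ∈ Icc (t k) (t (k + 1)), x s ∈ Shat k)
    (φhat : ℕ → ℝ)
    (hmargin : ∀ k, ∀ x' ∈ Shat k, ∀ v ∈ U,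
      φhat k ≤ xi f g h γ x' v - xi f g h γ (xhat k) v)
    (ud : ℕ → E m)
    (hdes : ∀ k, ∀ v : E m, ‖v - ud k‖ ≤ εu →
      v ∈ U ∧ 0 ≤ xi f g h γ (xhat k) v + φhat k)
    (hact : ∀ k, ‖u k - ud k‖ ≤ εu)
    (hinit : ∀ p : E n, ‖p - xhat 0‖ ≤ εx → 0 ≤ h p) :
    ∀ s, 0 ≤ s → 0 ≤ h (x s) := by

  have ht_nonneg : ∀ k, 0 ≤ t k := fun k => ht0 ▸ htmono.monotone (Nat.zero_le k)
  set y : ℝ → ℝ := fun s => h (x s) * Real.exp (γ * s) with hy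
  have hderiv : ∀ k, ∀ s ∈ Ioo (t k) (t (k+1)),
      HasDerivAt y (Real.exp (γ * s) * xi f g h γ (x s) (u k)) s := by
    intro k s hs
    have hx' := hode k s hs
    have hh' : HasFDerivAt h (fderiv ℝ h (x s)) (x s) :=
      (hh.differentiable one_ne_zero (x s)).hasFDerivAt
    have hcomp : HasDerivAt (fun s => h (x s))
        (fderiv ℝ h (x s) (f (x s) + g (x s) (u k))) s := hh'.comp_hasDerivAt s hx'
    have hexp : HasDerivAt (fun s => Real.exp (γ * s)) (Real.exp (γ * s) * γ) s := by
      simpa [Function.comp_def, mul_comm] using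
        (Real.hasDerivAt_exp (γ * s)).comp s ((hasDerivAt_id s).const_mul γ)
    have hmul : HasDerivAt (fun s => h (x s) * Real.exp (γ * s))
        (fderiv ℝ h (x s) (f (x s) + g (x s) (u k)) * Real.exp (γ * s)
          + h (x s) * (Real.exp (γ * s) * γ)) s := hcomp.mul hexp
    convert hmul using 1
    simp only [xi, map_add]
    ring
  have hxi : ∀ k, ∀ s ∈ Icc (t k) (t (k+1)), 0 ≤ xi f g h γ (x s) (u k) := by
    intro k s hs
    obtain ⟨hU, hξ⟩ := hdes k (u k) (hact k)
    have hm := hmargin k (x s) (hreach k s hs) (u k) hU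
    linarith
  have hmono : ∀ k, MonotoneOn y (Icc (t k) (t (k+1))) := by
    intro k
    have hsub : Icc (t k) (t (k+1)) ⊆ Ici (0:ℝ) := fun s hs => le_trans (ht_nonneg k) hs.1
    have hcont : ContinuousOn y (Icc (t k) (t (k+1))) :=
      (hh.continuous.comp_continuousOn (hxc.mono hsub)).mul
        ((Real.continuous_exp.comp (continuous_const.mul continuous_id)).continuousOn)
    apply monotoneOn_of_deriv_nonneg (convex_Icc _ _) hcont
    · intro s hs
      rw [interior_Icc] at hs
      exact (hderiv k s hs).differentiableAt.differentiableWithinAt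
    · intro s hs
      rw [interior_Icc] at hs
      rw [(hderiv k s hs).deriv]
      exact mul_nonneg (Real.exp_nonneg _) (hxi k s (Ioo_subset_Icc_self hs))
  have hyk : ∀ k, 0 ≤ y (t k) := by
    intro k
    induction k with
    | zero => exact mul_nonneg (hinit (x (t 0)) (hmeas 0)) (Real.exp_nonneg _)
    | succ k ih =>
      have hle : t k ≤ t (k+1) := (htmono (Nat.lt_succ_self k)).le
      have := hmono k (left_mem_Icc.2 hle) (right_mem_Icc.2 hle) hle
      linarith
  intro s hs
  have hex : ∃ k, s < t k := (httop.eventually (eventually_gt_atTop s)).exists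
  obtain ⟨N, hN⟩ : ∃ N, s < t N ∧ ∀ j < N, ¬ s < t j :=
    ⟨Nat.find hex, Nat.find_spec hex, fun j hj => Nat.find_min hex hj⟩
  obtain ⟨hN1, hN2⟩ := hN
  cases N with
  | zero => exact absurd hN1 (by rw [ht0]; exact not_lt.2 hs)
  | succ j =>
    have hjle : t j ≤ s := not_lt.1 (hN2 j (Nat.lt_succ_self j))
    have hmem : s ∈ Icc (t j) (t (j+1)) := ⟨hjle, hN1.le⟩
    have hys := hmono j (left_mem_Icc.2 (hjle.trans hN1.le)) hmem hjle
    have hypos : 0 ≤ y s := le_trans (hyk j) hys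
    have hep : 0 < Real.exp (γ * s) := Real.exp_pos _
    simp only [hy] at hypos
    nlinarith [hypos]
end
end
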